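/- Let G, H be groups and φ₁, …, φ_k : G → H homomorphisms (k ≥ 2). If R(φ₁, …, φ_k) < ∞, then R(φ₁, φ_j) < ∞ for every j = 2, …, k, and R(φ₁, …, φ_k) ≥ R(φ₁, φ₂)·R(φ₁, φ₃)⋯R(φ₁, φ_k). -/
import Mathlib

/-- The twisted conjugacy relation on `H` determined by a pair of homomorphisms. -/
def tcRel {G H : Type*} [Group G] [Group H] (φ ψ : G →* H) (α β : H) : Prop :=
  ∃ z : G, β = φ z * α * (ψ z)⁻¹

/-- The Reidemeister set `𝓡(φ, ψ)` of a pair of homomorphisms. -/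
def ReidSet₂ {G H : Type*} [Group G] [Group H] (φ ψ : G →* H) : Type _ :=
  Quot (tcRel φ ψ)

/-- The relation on `(k-1)`-tuples (`k = m+1`) defining the Reidemeister classes of a family
`φ₁, …, φ_k : G → H`. -/
def mRel {G H : Type*} [Group G] [Group H] {m : ℕ} (φ : Fin (m + 1) → (G →* H))
    (α β : Fin m → H) : Prop :=
  ∃ z : G, ∀ i : Fin m, β i = φ 0 z * α i * (φ i.succ z)⁻¹

/-- The Reidemeister set `𝓡(φ₁,…,φ_k)` of a family of homomorphisms. -/
def ReidSetM {G H : Type*} [Group G] [Group H] {m : ℕ} (φ : Fin (m + 1) → (G →* H)) :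
    Type _ :=
  Quot (mRel φ)

/-- The natural map from the Reidemeister set of a family to the product of the pairwise
Reidemeister sets. -/
def reidProj {G H : Type*} [Group G] [Group H] {m : ℕ} (φ : Fin (m + 1) → (G →* H)) :
    ReidSetM φ → ∀ i : Fin m, ReidSet₂ (φ 0) (φ i.succ) :=
  Quot.lift (fun α i => Quot.mk _ (α i)) (by
    intro α β ⟨z, hz⟩
    funext i
    exact Quot.sound ⟨z, hz i⟩)

theorem reidProj_surjective {G H : Type*} [Group G] [Group H] {m : ℕ}
    (φ : Fin (m + 1) → (G →* H)) : Function.Surjective (reidProj φ) := by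
  intro g
  choose α hα using fun i => Quot.exists_rep (g i)
  exact ⟨Quot.mk _ α, funext fun i => hα i⟩

/-- Let `G, H` be groups and `φ₁,…,φ_k : G → H` homomorphisms (`k = m+1 ≥ 2`).  If
`R(φ₁,…,φ_k) < ⊤` then `R(φ₁,φ_j) < ∞` for every `j = 2,…,k`, and
`R(φ₁,…,φ_k) ≥ R(φ₁,φ₂)⋯R(φ₁,φ_k)`. -/
theorem reidemeister_number_ge_prod {G H : Type*} [Group G] [Group H] {m : ℕ} (hm : 1 ≤ m)
    (φ : Fin (m + 1) → (G →* H)) (hfin : ENat.card (ReidSetM φ) < ⊤) :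
    (∀ i : Fin m, ENat.card (ReidSet₂ (φ 0) (φ i.succ)) < ⊤) ∧
    (∏ i : Fin m, Nat.card (ReidSet₂ (φ 0) (φ i.succ))) ≤ Nat.card (ReidSetM φ) := by
  have hFin : Finite (ReidSetM φ) := by
    by_contra h
    rw [not_finite_iff_infinite] at h
    rw [ENat.card_eq_top_of_infinite] at hfin
    exact lt_irrefl _ hfin
  have hne : ∀ i : Fin m, Nonempty (ReidSet₂ (φ 0) (φ i.succ)) :=
    fun i => ⟨Quot.mk _ 1⟩
  have hsurj := reidProj_surjective φ
  have hPiFin : Finite (∀ i : Fin m, ReidSet₂ (φ 0) (φ i.succ)) :=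
    Finite.of_surjective _ hsurj
  have hFin2 : ∀ i : Fin m, Finite (ReidSet₂ (φ 0) (φ i.succ)) := by
    intro i
    have : Function.Surjective (fun g : (∀ j : Fin m, ReidSet₂ (φ 0) (φ j.succ)) => g i) :=
      Function.surjective_eval i
    exact Finite.of_surjective _ this
  refine ⟨fun i => ?_, ?_⟩
  · have := hFin2 i
    rw [ENat.card_eq_coe_natCard]
    exact ENat.coe_lt_top _
  · calc (∏ i : Fin m, Nat.card (ReidSet₂ (φ 0) (φ i.succ)))
        = Nat.card (∀ i : Fin m, ReidSet₂ (φ 0) (φ i.succ)) := Nat.card_pi.symm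
      _ ≤ Nat.card (ReidSetM φ) := Nat.card_le_card_of_surjective _ hsurj
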